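/- (Pointwise dissipation of the plant storage function with estimation-error cross term.) Let Z be a real Hilbert space, X a linear subspace of Z, A : X → Z a linear map, B₁ : ℝ^r → Z, B₂ : ℝ^m → Z continuous linear maps, C₁ : X → ℝ^p, H : X → ℝ^m linear maps, D₁ : ℝ^r → ℝ^p a linear map. Let P₁ : Z → Z be continuous, self-adjoint, coercive, map X into X with P₁(X) = X, and let P₁⁻¹ denote its (continuous, self-adjoint) inverse, which maps X into X. Assume there exist ε₁ > 0 and γ₁ > 0 such that for all h ∈ X, ω ∈ ℝ^r, υ ∈ ℝ^p: 2⟨A(P₁h) + B₂(Hh) + B₁ω, h⟩ − γ₁‖ω‖² − γ₁‖υ‖² + 2υᵀ(C₁(P₁h) + D₁ω) ≤ −ε₁‖h‖². Let ω : [0,∞) → ℝ^r, let e : [0,∞) → Z with e(t) ∈ X, and let x : [0,∞) → Z be differentiable at t ≥ 0 with x(t) ∈ X and dx/dt(t) = A(x(t)) + B₂(H(P₁⁻¹x(t))) + B₂(H(P₁⁻¹e(t))) + B₁(ω(t)). Set h(t) = P₁⁻¹x(t) and z(t) = C₁(x(t)) + D₁(ω(t)). Then V₁(s) := ⟨x(s),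 P₁⁻¹(x(s))⟩ is differentiable at t and V₁′(t) ≤ −ε₁‖h(t)‖² + γ₁‖ω(t)‖² − (1/γ₁)‖z(t)‖² + 2⟨B₂(H(P₁⁻¹e(t))), h(t)⟩. -/

import Mathlib

open RealInnerProductSpace

/-- (Pointwise dissipation of the plant storage function with
estimation-error cross term.)  Along the closed-loop plant dynamics driven by the
controller `u = H(P₁⁻¹(x+e))`, the storage function `V₁(s) = ⟨x(s), P₁⁻¹ x(s)⟩` is
differentiable at `t` with
`V₁'(t) ≤ −ε₁‖h(t)‖² + γ₁‖ω(t)‖² − (1/γ₁)‖z(t)‖² + 2⟨B₂ H(P₁⁻¹e(t)), h(t)⟩`,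
where `h(t) = P₁⁻¹x(t)` and `z(t) = C₁ x(t) + D₁ ω(t)`. -/
theorem plant_storage_dissipation_with_cross_term
    {Z : Type*} [NormedAddCommGroup Z] [InnerProductSpace ℝ Z] [CompleteSpace Z]
    (X : Submodule ℝ Z) {r m p : ℕ}
    (A : X →ₗ[ℝ] Z)
    (B₁ : EuclideanSpace ℝ (Fin r) →L[ℝ] Z) (B₂ : EuclideanSpace ℝ (Fin m) →L[ℝ] Z)
    (C₁ : X →ₗ[ℝ] EuclideanSpace ℝ (Fin p)) (H : X →ₗ[ℝ] EuclideanSpace ℝ (Fin m))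
    (D₁ : EuclideanSpace ℝ (Fin r) →ₗ[ℝ] EuclideanSpace ℝ (Fin p))
    (P₁ Pinv : Z →L[ℝ] Z)
    (hP₁sa : ∀ x y : Z, ⟪P₁ x, y⟫ = ⟪x, P₁ y⟫)
    (hP₁coer : ∃ ε > 0, ∀ x : Z, ⟪x, P₁ x⟫ ≥ ε * ‖x‖ ^ 2)
    (hP₁X : ∀ x ∈ X, P₁ x ∈ X)
    (hP₁img : ⇑P₁ '' (X : Set Z) = (X : Set Z))
    (hinv1 : ∀ x, Pinv (P₁ x) = x) (hinv2 : ∀ x, P₁ (Pinv x) = x)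
    (hPinvsa : ∀ x y : Z, ⟪Pinv x, y⟫ = ⟪x, Pinv y⟫)
    (hPinvX : ∀ x ∈ X, Pinv x ∈ X)
    (ε₁ γ₁ : ℝ) (hε₁ : 0 < ε₁) (hγ₁ : 0 < γ₁)
    (hdiss : ∀ (h : X) (ω : EuclideanSpace ℝ (Fin r)) (υ : EuclideanSpace ℝ (Fin p)),
      2 * ⟪A ⟨P₁ (h : Z), hP₁X (h : Z) h.2⟩ + B₂ (H h) + B₁ ω, (h : Z)⟫
        - γ₁ * ‖ω‖ ^ 2 - γ₁ * ‖υ‖ ^ 2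
        + 2 * ⟪υ, C₁ ⟨P₁ (h : Z), hP₁X (h : Z) h.2⟩ + D₁ ω⟫
      ≤ -ε₁ * ‖(h : Z)‖ ^ 2)
    (ω : ℝ → EuclideanSpace ℝ (Fin r)) (e : ℝ → Z) (x : ℝ → Z)
    (t : ℝ) (ht : 0 ≤ t) (hmx : x t ∈ X) (hme : e t ∈ X)
    (hder : HasDerivAt x
      (A ⟨x t, hmx⟩ + B₂ (H ⟨Pinv (x t), hPinvX (x t) hmx⟩)
        + B₂ (H ⟨Pinv (e t), hPinvX (e t) hme⟩) + B₁ (ω t)) t) :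
    DifferentiableAt ℝ (fun s => ⟪x s, Pinv (x s)⟫) t ∧
    deriv (fun s => ⟪x s, Pinv (x s)⟫) t
      ≤ -ε₁ * ‖Pinv (x t)‖ ^ 2 + γ₁ * ‖ω t‖ ^ 2
        - (1 / γ₁) * ‖C₁ ⟨x t, hmx⟩ + D₁ (ω t)‖ ^ 2
        + 2 * ⟪B₂ (H ⟨Pinv (e t), hPinvX (e t) hme⟩), Pinv (x t)⟫ := by
  classical
  set x' : Z := A ⟨x t, hmx⟩ + B₂ (H ⟨Pinv (x t), hPinvX (x t) hmx⟩)
      + B₂ (H ⟨Pinv (e t), hPinvX (e t) hme⟩) + B₁ (ω t) with hx'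
  have hder2 : HasDerivAt (fun s => Pinv (x s)) (Pinv x') t :=
    Pinv.hasFDerivAt.comp_hasDerivAt t hder
  have hV : HasDerivAt (fun s => ⟪x s, Pinv (x s)⟫)
      (⟪x t, Pinv x'⟫ + ⟪x', Pinv (x t)⟫) t := hder.inner ℝ hder2
  refine ⟨hV.differentiableAt, ?_⟩
  rw [hV.deriv]
  have hsym : ⟪x t, Pinv x'⟫ = ⟪x', Pinv (x t)⟫ := by
    rw [← hPinvsa, real_inner_comm]
  rw [hsym]
  -- apply dissipation with h = Pinv (x t), υ = γ₁⁻¹ • z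
  set z : EuclideanSpace ℝ (Fin p) := C₁ ⟨x t, hmx⟩ + D₁ (ω t) with hz
  have hsub : (⟨P₁ (Pinv (x t)), hP₁X _ (hPinvX (x t) hmx)⟩ : X) = ⟨x t, hmx⟩ :=
    Subtype.ext (hinv2 _)
  have hd := hdiss ⟨Pinv (x t), hPinvX (x t) hmx⟩ (ω t) (γ₁⁻¹ • z)
  rw [hsub] at hd
  have hnz : ‖γ₁⁻¹ • z‖ ^ 2 = γ₁⁻¹ ^ 2 * ‖z‖ ^ 2 := by
    rw [norm_smul]; simp [mul_pow, abs_of_pos hγ₁]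
  have hiz : ⟪(γ₁⁻¹ • z : EuclideanSpace ℝ (Fin p)), z⟫ = γ₁⁻¹ * ‖z‖ ^ 2 := by
    rw [real_inner_smul_left, real_inner_self_eq_norm_sq]
  rw [hnz, hiz] at hd
  have hγne : γ₁ ≠ 0 := ne_of_gt hγ₁
  have key : 2 * ⟪A ⟨x t, hmx⟩ + B₂ (H ⟨Pinv (x t), hPinvX (x t) hmx⟩) + B₁ (ω t),
      Pinv (x t)⟫ ≤ -ε₁ * ‖Pinv (x t)‖ ^ 2 + γ₁ * ‖ω t‖ ^ 2 - (1 / γ₁) * ‖z‖ ^ 2 := by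
    have h1 : γ₁ * (γ₁⁻¹ ^ 2 * ‖z‖ ^ 2) = (1 / γ₁) * ‖z‖ ^ 2 := by
      field_simp
    have h2 : 2 * (γ₁⁻¹ * ‖z‖ ^ 2) = 2 * ((1 / γ₁) * ‖z‖ ^ 2) := by
      field_simp
    nlinarith [hd]
  have hexp : ⟪x', Pinv (x t)⟫
      = ⟪A ⟨x t, hmx⟩ + B₂ (H ⟨Pinv (x t), hPinvX (x t) hmx⟩) + B₁ (ω t), Pinv (x t)⟫
        + ⟪B₂ (H ⟨Pinv (e t), hPinvX (e t) hme⟩), Pinv (x t)⟫ := by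
    rw [hx']
    simp only [inner_add_left]
    ring
  rw [hexp]
  linarith [key]
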